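/- For each n ≥ 1 there exists a constant C_n > 0 such that |y(v) + y(-v) - ∑_{k=0}^n 2a_{2k} v^{2k}| ≤ C_n v^{2n} for all v ∈ ℝ, where a_k are the Maclaurin coefficients of y. -/

import Mathlib

open Real Set Finset Filter Topology

lemma rlog_analytic {x : ℝ} (hx : 0 < x) : AnalyticAt ℝ Real.log x := by
  have h1 : AnalyticAt ℂ Complex.log (x : ℂ) :=
    analyticAt_clog (Complex.ofReal_mem_slitPlane.2 hx)
  have h2 : AnalyticAt ℝ (fun t : ℝ => (Complex.log (t : ℂ)).re) x :=
    (Complex.reCLM.analyticAt _).comp ((h1.restrictScalars).comp (Complex.ofRealCLM.analyticAt _))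
  apply h2.congr
  filter_upwards [eventually_gt_nhds hx] with t ht
  rw [Complex.log_ofReal_re]

lemma sqrt_analytic {w : ℝ → ℝ} {x : ℝ} (hw : AnalyticAt ℝ w x) (h : 0 < w x) :
    AnalyticAt ℝ (fun t => Real.sqrt (w t)) x := by
  have h2 : AnalyticAt ℝ (fun t => Real.exp (Real.log (w t) * (1/2 : ℝ))) x := by
    exact (((rlog_analytic h).comp hw).mul analyticAt_const).rexp
  apply h2.congr
  have : ∀ᶠ t in 𝓝 x, 0 < w t := hw.continuousAt.eventually (eventually_gt_nhds h)
  filter_upwards [this] with t ht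
  rw [← Real.rpow_def_of_pos ht, Real.sqrt_eq_rpow]

lemma factor_zero {h : ℝ → ℝ} (hh : AnalyticAt ℝ h 0) (h0 : h 0 = 0) :
    ∃ h₁ : ℝ → ℝ, AnalyticAt ℝ h₁ 0 ∧ ∀ᶠ x in 𝓝 (0:ℝ), h x = x * h₁ x := by
  by_cases hord : analyticOrderAt h 0 = ⊤
  · refine ⟨fun _ => 0, analyticAt_const, ?_⟩
    filter_upwards [analyticOrderAt_eq_top.mp hord] with x hx
    simp [hx]
  · obtain ⟨n, hn⟩ : ∃ n : ℕ, analyticOrderAt h 0 = n := ⟨(analyticOrderAt h 0).toNat, (ENat.coe_toNat hord).symm⟩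
    obtain ⟨g, hg, hg0, hev⟩ := hh.analyticOrderAt_eq_natCast.mp hn
    have hn0 : n ≠ 0 := by
      rintro rfl
      apply hg0
      have := hev.self_of_nhds
      simpa [h0] using this.symm
    obtain ⟨m, rfl⟩ := Nat.exists_eq_succ_of_ne_zero hn0
    refine ⟨fun x => x ^ m * g x, ((analyticAt_id.pow m).mul hg), ?_⟩
    filter_upwards [hev] with x hx
    rw [hx]
    simp [pow_succ]
    ring

lemma deriv_id_mul {h₁ : ℝ → ℝ} (hh₁ : AnalyticAt ℝ h₁ 0) :
    deriv (fun x => x * h₁ x) 0 = h₁ 0 := by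
  have : HasDerivAt (fun x => x * h₁ x) _ 0 := (hasDerivAt_id' (0:ℝ)).mul (hh₁.differentiableAt.hasDerivAt)
  simpa using this.deriv



noncomputable def qq : ℝ → ℝ := fun x => x - Real.log (1 + x)

lemma qq_hasDerivAt {x : ℝ} (hx : -1 < x) : HasDerivAt qq (1 - (1+x)⁻¹) x := by
  have h1 : (1:ℝ) + x ≠ 0 := by linarith
  have h2 : HasDerivAt (fun t : ℝ => 1 + t) 1 x := by
    simpa using (hasDerivAt_id x).const_add 1
  have h3 : HasDerivAt (fun t : ℝ => Real.log (1 + t)) ((1+x)⁻¹ * 1) x :=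
    (Real.hasDerivAt_log h1).comp x h2
  simpa using (show HasDerivAt qq _ x from (hasDerivAt_id' x).sub h3)

lemma qq_analytic : AnalyticAt ℝ qq 0 := by
  have h1 : AnalyticAt ℝ (fun x : ℝ => Real.log (1 + x)) 0 := by
    have hf1 : AnalyticAt ℝ (fun x : ℝ => 1 + x) 0 := analyticAt_const.add analyticAt_id
    have hlog : AnalyticAt ℝ Real.log ((fun x : ℝ => 1 + x) 0) := by
      simpa using rlog_analytic one_pos
    simpa [Function.comp_def] using hlog.comp hf1
  exact analyticAt_id.sub h1

lemma exists_qq2 : ∃ q₂ : ℝ → ℝ, AnalyticAt ℝ q₂ 0 ∧ q₂ 0 = 1/2 ∧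
    ∀ᶠ x in 𝓝 (0:ℝ), qq x = x^2 * q₂ x := by
  have hq0 : qq 0 = 0 := by simp [qq]
  obtain ⟨q₁, hq₁an, hev1⟩ := factor_zero qq_analytic hq0
  have hd : deriv qq 0 = 0 := by
    have := (qq_hasDerivAt (x := 0) (by norm_num)).deriv
    simpa using this
  have hev1' : qq =ᶠ[𝓝 (0:ℝ)] (fun x => x * q₁ x) := hev1
  have hq₁0 : q₁ 0 = 0 := by
    have h2 : deriv qq 0 = q₁ 0 := by
      rw [Filter.EventuallyEq.deriv_eq hev1', deriv_id_mul hq₁an]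
    rw [← h2, hd]
  obtain ⟨q₂, hq₂an, hev2⟩ := factor_zero hq₁an hq₁0
  have hev : ∀ᶠ x in 𝓝 (0:ℝ), qq x = x^2 * q₂ x := by
    filter_upwards [hev1, hev2] with x h1 h2
    rw [h1, h2]; ring
  refine ⟨q₂, hq₂an, ?_, hev⟩
  -- value of q₂ 0
  have hq₂' : ContinuousAt (deriv q₂) 0 := by
    have h1 : ContinuousAt (fun x => (fderiv ℝ q₂ x) 1) 0 :=
      (ContinuousLinearMap.apply ℝ ℝ (1:ℝ)).continuous.continuousAt.comp hq₂an.fderiv.continuousAt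
    have : (deriv q₂) = fun x => (fderiv ℝ q₂ x) 1 := by
      funext x; rw [fderiv_apply_one_eq_deriv]
    rw [this]; exact h1
  set p : ℝ → ℝ := fun x => 2 * q₂ x + x * deriv q₂ x with hp
  have hpc : ContinuousAt p 0 := by
    exact ((continuousAt_const.mul hq₂an.continuousAt).add
      (continuousAt_id.mul hq₂'))
  have hev3 : ∀ᶠ x in 𝓝[≠] (0:ℝ), (1 + x)⁻¹ = p x := by
    have hev' : qq =ᶠ[𝓝 (0:ℝ)] (fun x => x^2 * q₂ x) := hev
    have hder : ∀ᶠ x in 𝓝 (0:ℝ), deriv qq x = deriv (fun t => t^2 * q₂ t) x := hev'.deriv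
    have hq2diff : ∀ᶠ x in 𝓝 (0:ℝ), DifferentiableAt ℝ q₂ x := by
      filter_upwards [hq₂an.eventually_analyticAt] with x hx using hx.differentiableAt
    have hsmall : ∀ᶠ x in 𝓝 (0:ℝ), -1 < x := eventually_gt_nhds (by norm_num)
    rw [eventually_nhdsWithin_iff]
    filter_upwards [hder, hq2diff, hsmall] with x h1 h2 h3 hne
    have hne' : x ≠ 0 := hne
    have hderq : deriv qq x = 1 - (1+x)⁻¹ := (qq_hasDerivAt h3).deriv
    have hder2 : deriv (fun t => t^2 * q₂ t) x = 2*x*q₂ x + x^2 * deriv q₂ x := by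
      have : HasDerivAt (fun t => t^2 * q₂ t) _ x := ((hasDerivAt_pow 2 x).mul h2.hasDerivAt)
      rw [this.deriv]; norm_num <;> ring
    have key : 1 - (1+x)⁻¹ = 2*x*q₂ x + x^2 * deriv q₂ x := by rw [← hderq, h1, hder2]
    have h1x : (1:ℝ) + x ≠ 0 := by linarith
    have key2 : x * (1+x)⁻¹ = x * p x := by
      have : (1:ℝ) - (1+x)⁻¹ = x * (1+x)⁻¹ := by field_simp; ring
      rw [← this, key, hp]; ring
    exact mul_left_cancel₀ hne' key2
  have t1 : Tendsto p (𝓝[≠] (0:ℝ)) (𝓝 (p 0)) :=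
    (hpc.tendsto).mono_left nhdsWithin_le_nhds
  have t2 : Tendsto (fun x : ℝ => (1+x)⁻¹) (𝓝[≠] (0:ℝ)) (𝓝 1) := by
    have : ContinuousAt (fun x : ℝ => (1+x)⁻¹) 0 := by
      apply ContinuousAt.inv₀ (by fun_prop) (by norm_num)
    simpa using this.tendsto.mono_left nhdsWithin_le_nhds
  have t3 : Tendsto (fun x : ℝ => (1+x)⁻¹) (𝓝[≠] (0:ℝ)) (𝓝 (p 0)) :=
    t1.congr' (by filter_upwards [hev3] with x hx using hx.symm)
  have : p 0 = 1 := tendsto_nhds_unique t3 t2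
  have : 2 * q₂ 0 = 1 := by simpa [hp] using this
  linarith


noncomputable def gg : ℝ → ℝ := fun x => Real.sign x * Real.sqrt (qq x)


theorem gg_loc : AnalyticAt ℝ gg 0 ∧ HasStrictDerivAt gg (Real.sqrt 2 / 2) 0 := by
  obtain ⟨q₂, hq₂an, hq₂0, hev⟩ := exists_qq2
  have hs : AnalyticAt ℝ (fun x => Real.sqrt (q₂ x)) 0 :=
    sqrt_analytic hq₂an (by rw [hq₂0]; norm_num)
  have hG₀an : AnalyticAt ℝ (fun x => x * Real.sqrt (q₂ x)) 0 := analyticAt_id.mul hs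
  have hq₂pos : ∀ᶠ x in 𝓝 (0:ℝ), 0 < q₂ x :=
    hq₂an.continuousAt.eventually (eventually_gt_nhds (by rw [hq₂0]; norm_num))
  have heq : (fun x => x * Real.sqrt (q₂ x)) =ᶠ[𝓝 (0:ℝ)] gg := by
    filter_upwards [hev, hq₂pos] with x h1 h2
    have : Real.sqrt (qq x) = |x| * Real.sqrt (q₂ x) := by
      rw [h1, Real.sqrt_mul (sq_nonneg x), Real.sqrt_sq_eq_abs]
    simp only [gg, this]
    have hsx : Real.sign x * |x| = x := by
      rcases lt_trichotomy x 0 with h|h|h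
      · rw [Real.sign_of_neg h, abs_of_neg h]; ring
      · simp [h]
      · rw [Real.sign_of_pos h, abs_of_pos h]; ring
    rw [← mul_assoc, hsx]
  have hggan : AnalyticAt ℝ gg 0 := hG₀an.congr heq
  constructor
  · exact hggan
  · have h2 : Real.sqrt (q₂ 0) = Real.sqrt 2 / 2 := by
      rw [hq₂0]
      rw [show (1/2 : ℝ) = 2⁻¹ by norm_num, Real.sqrt_inv]
      rw [eq_div_iff (by norm_num : (2:ℝ) ≠ 0)]
      rw [inv_mul_eq_div, div_eq_iff (Real.sqrt_ne_zero'.2 (by norm_num))]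
      exact (Real.mul_self_sqrt (by norm_num)).symm
    have := (hggan.contDiffAt (n := 1)).hasStrictDerivAt (by norm_num)
    have hd : deriv gg 0 = Real.sqrt 2 / 2 := by
      have hG₀d : HasDerivAt (fun x => x * Real.sqrt (q₂ x)) (Real.sqrt (q₂ 0)) 0 := by
        have : HasDerivAt (fun x => x * Real.sqrt (q₂ x)) _ 0 := (hasDerivAt_id' (0:ℝ)).mul hs.differentiableAt.hasDerivAt
        simpa using this
      have := (hG₀d.congr_of_eventuallyEq heq.symm).deriv
      rw [this, h2]
    rwa [hd] at this




lemma qq_cont {x : ℝ} (hx : -1 < x) : ContinuousAt qq x := (qq_hasDerivAt hx).continuousAt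

lemma qq_pos {x : ℝ} (hx : -1 < x) (hne : x ≠ 0) : 0 < qq x := by
  have h1 : 0 < 1 + x := by linarith
  have h2 : Real.log (1 + x) < 1 + x - 1 := by
    apply Real.log_lt_sub_one_of_pos h1
    intro h; apply hne; linarith
  simp only [qq]; linarith

lemma qq_mono : StrictMonoOn qq (Ici (0:ℝ)) := by
  apply strictMonoOn_of_deriv_pos (convex_Ici 0)
  · intro x hx
    exact (qq_cont (by simp at hx; linarith)).continuousWithinAt
  · intro x hx
    rw [interior_Ici] at hx
    have hx' : (0:ℝ) < x := hx
    rw [(qq_hasDerivAt (by linarith)).deriv]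
    have h1 : (1:ℝ) < 1 + x := by linarith
    have : (1+x)⁻¹ < 1 := by
      rw [inv_lt_one_iff₀]; right; exact h1
    linarith

lemma qq_anti : StrictAntiOn qq (Ioc (-1:ℝ) 0) := by
  apply strictAntiOn_of_deriv_neg (convex_Ioc (-1) 0)
  · intro x hx
    exact (qq_cont hx.1).continuousWithinAt
  · intro x hx
    rw [interior_Ioc] at hx
    rw [(qq_hasDerivAt hx.1).deriv]
    have h1 : 0 < 1 + x := by have := hx.1; linarith
    have h2 : 1 + x < 1 := by have := hx.2; linarith
    have : 1 < (1+x)⁻¹ := (one_lt_inv₀ h1).2 h2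
    linarith

theorem gg_mono : StrictMonoOn gg (Ioi (-1:ℝ)) := by
  intro x hx y hy hxy
  simp only [Set.mem_Ioi] at hx hy
  rcases lt_trichotomy x 0 with hx0 | hx0 | hx0
  · have hgx : gg x = -Real.sqrt (qq x) := by
      simp [gg, Real.sign_of_neg hx0]
    have hqx : 0 < qq x := qq_pos hx (ne_of_lt hx0)
    rcases lt_trichotomy y 0 with hy0 | hy0 | hy0
    · have hgy : gg y = -Real.sqrt (qq y) := by simp [gg, Real.sign_of_neg hy0]
      have hq : qq y < qq x := qq_anti ⟨hx, le_of_lt hx0⟩ ⟨hy, le_of_lt hy0⟩ hxy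
      have : Real.sqrt (qq y) < Real.sqrt (qq x) :=
        Real.sqrt_lt_sqrt (le_of_lt (qq_pos hy (ne_of_lt hy0))) hq
      rw [hgx, hgy]; linarith
    · rw [hgx, hy0]
      simp [gg, Real.sign_zero]
      positivity
    · have hgy : gg y = Real.sqrt (qq y) := by simp [gg, Real.sign_of_pos hy0]
      have h1 : 0 < Real.sqrt (qq y) := Real.sqrt_pos.2 (qq_pos hy (ne_of_gt hy0))
      have h2 : 0 < Real.sqrt (qq x) := Real.sqrt_pos.2 hqx
      rw [hgx, hgy]; linarith
  · subst hx0
    have hgx : gg 0 = 0 := by simp [gg, Real.sign_zero]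
    have hgy : gg y = Real.sqrt (qq y) := by simp [gg, Real.sign_of_pos hxy]
    rw [hgx, hgy]
    exact Real.sqrt_pos.2 (qq_pos hy (ne_of_gt hxy))
  · have hy0 : 0 < y := lt_trans hx0 hxy
    have hgx : gg x = Real.sqrt (qq x) := by simp [gg, Real.sign_of_pos hx0]
    have hgy : gg y = Real.sqrt (qq y) := by simp [gg, Real.sign_of_pos hy0]
    rw [hgx, hgy]
    exact Real.sqrt_lt_sqrt (le_of_lt (qq_pos hx (ne_of_gt hx0)))
      (qq_mono (le_of_lt hx0) (le_of_lt hy0) hxy)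




lemma gg_an : AnalyticAt ℝ gg 0 := gg_loc.1

lemma gg_strict : HasStrictDerivAt gg (Real.sqrt 2 / 2) 0 := gg_loc.2

lemma gg_zero : gg 0 = 0 := by simp [gg, Real.sign_zero]

lemma sqrt2ne : Real.sqrt 2 / 2 ≠ 0 := by positivity

-- main inverse lemma
theorem ff_analytic {f : ℝ → ℝ}
    (hf : ∀ u : ℝ, f u ∈ Set.Ioi (-1 : ℝ) ∧ gg (f u) = u) :
    AnalyticAt ℝ f 0 ∧ f 0 = 0 ∧ deriv f 0 = (Real.sqrt 2 / 2)⁻¹ ∧ StrictMono f := by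
  have hginj : InjOn gg (Ioi (-1:ℝ)) := gg_mono.injOn
  have hgf : ∀ u, gg (f u) = u := fun u => (hf u).2
  have hfI : ∀ u, f u ∈ Ioi (-1:ℝ) := fun u => (hf u).1
  have hmono : StrictMono f := by
    intro u u' huu'
    rcases lt_trichotomy (f u) (f u') with h | h | h
    · exact h
    · exfalso; rw [← hgf u, ← hgf u', h] at huu'; exact lt_irrefl _ huu'
    · exfalso
      have := gg_mono (hfI u') (hfI u) h
      rw [hgf u, hgf u'] at this
      exact absurd huu' (not_lt.2 (le_of_lt this))
  have hf0 : f 0 = 0 := by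
    apply hginj (hfI 0) (by norm_num : (0:ℝ) ∈ Ioi (-1:ℝ))
    rw [hgf 0, gg_zero]
  -- local inverse
  set c := Real.sqrt 2 / 2 with hc
  have HS : HasStrictFDerivAt gg ((ContinuousLinearEquiv.unitsEquivAut ℝ
      (Units.mk0 c sqrt2ne)) : ℝ →L[ℝ] ℝ) 0 := gg_strict.hasStrictFDerivAt_equiv sqrt2ne
  set F := HS.localInverse gg _ 0 with hF
  have h_left : ∀ᶠ x in 𝓝 (0:ℝ), F (gg x) = x := HS.eventually_left_inverse
  have h_right : ∀ᶠ v in 𝓝 (0:ℝ), gg (F v) = v := by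
    have := HS.eventually_right_inverse
    rwa [gg_zero] at this
  have hFc : ContinuousAt F 0 := by
    have := HS.localInverse_continuousAt
    rwa [gg_zero] at this
  have hF0 : F 0 = 0 := by
    have := HS.localInverse_apply_image
    rwa [gg_zero] at this
  -- analyticity of F
  have hF_an : AnalyticAt ℝ F 0 := by
    have h0 : (0:ℝ) ∈ (HS.toOpenPartialHomeomorph gg).source := HS.mem_toOpenPartialHomeomorph_source
    have hcoe : ⇑(HS.toOpenPartialHomeomorph gg) = gg := HS.toOpenPartialHomeomorph_coe
    have han : AnalyticAt ℝ (HS.toOpenPartialHomeomorph gg) 0 := by rw [hcoe]; exact gg_an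
    have hder : fderiv ℝ (HS.toOpenPartialHomeomorph gg) 0 = (ContinuousLinearEquiv.unitsEquivAut ℝ
      (Units.mk0 c sqrt2ne)) := by rw [hcoe]; exact HS.hasFDerivAt.fderiv
    have := (HS.toOpenPartialHomeomorph gg).analyticAt_symm' h0 han hder
    rw [hcoe, gg_zero] at this
    rw [hF, HS.localInverse_def]
    exact this
  -- f = F near 0
  have hfF : f =ᶠ[𝓝 (0:ℝ)] F := by
    have hFmem : ∀ᶠ v in 𝓝 (0:ℝ), F v ∈ Ioi (-1:ℝ) := by
      have : Ioi (-1:ℝ) ∈ 𝓝 (F 0) := by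
        rw [hF0]; exact Ioi_mem_nhds (by norm_num)
      exact hFc.eventually_mem this
    filter_upwards [h_right, hFmem] with v h1 h2
    exact hginj (hfI v) h2 (by rw [hgf v, h1])
  have hf_an : AnalyticAt ℝ f 0 := hF_an.congr hfF.symm
  have hdf : deriv f 0 = c⁻¹ := by
    rw [hfF.deriv_eq]
    have : HasStrictDerivAt F c⁻¹ 0 := by
      have := gg_strict.to_localInverse (hf' := sqrt2ne)
      rwa [gg_zero] at this
    exact this.hasDerivAt.deriv
  exact ⟨hf_an, hf0, hdf, hmono⟩



theorem yy_analytic {f y : ℝ → ℝ}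
    (hf_an : AnalyticAt ℝ f 0) (hf0 : f 0 = 0) (hdf : deriv f 0 = (Real.sqrt 2 / 2)⁻¹)
    (hy : ∀ v : ℝ, y v = if v = 0 then Real.sqrt 2 / 2 else v / f v) :
    AnalyticAt ℝ y 0 := by
  obtain ⟨f₁, hf₁an, hevf⟩ := factor_zero hf_an hf0
  have hf₁0 : f₁ 0 = (Real.sqrt 2 / 2)⁻¹ := by
    have hevf' : f =ᶠ[𝓝 (0:ℝ)] (fun x => x * f₁ x) := hevf
    rw [← hdf, hevf'.deriv_eq, deriv_id_mul hf₁an]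
  have hf₁ne : f₁ 0 ≠ 0 := by rw [hf₁0]; positivity
  have hf₁pos : ∀ᶠ v in 𝓝 (0:ℝ), f₁ v ≠ 0 :=
    hf₁an.continuousAt.eventually_ne hf₁ne
  have hyev : (fun v => (f₁ v)⁻¹) =ᶠ[𝓝 (0:ℝ)] y := by
    filter_upwards [hevf, hf₁pos] with v h1 h2
    rw [hy v]
    by_cases hv : v = 0
    · subst hv
      rw [if_pos rfl, hf₁0]
      rw [inv_inv]
    · rw [if_neg hv, h1]
      field_simp
  exact (hf₁an.inv hf₁ne).congr hyev


lemma coeff_eq {h : ℝ → ℝ} {p : FormalMultilinearSeries ℝ ℝ ℝ}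
    (hp : HasFPowerSeriesAt h p 0) (k : ℕ) :
    p.coeff k = iteratedDeriv k h 0 / (Nat.factorial k : ℝ) := by
  obtain ⟨r, hr⟩ := hp
  have h1 := hr.factorial_smul (1:ℝ) k
  rw [iteratedDeriv_eq_iteratedFDeriv]
  rw [← h1]
  have : (p k fun _ => (1:ℝ)) = p.coeff k := rfl
  rw [this, nsmul_eq_mul]
  field_simp [Nat.factorial_ne_zero]

theorem near_bound {y : ℝ → ℝ} {a : ℕ → ℝ} (hy_an : AnalyticAt ℝ y 0)
    (ha : ∀ k : ℕ, a k = iteratedDeriv k y 0 / (Nat.factorial k)) (n : ℕ) :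
    ∃ C : ℝ, 0 < C ∧ ∃ ε : ℝ, 0 < ε ∧ ∀ v : ℝ, |v| ≤ ε →
      |y v + y (-v) - ∑ k ∈ Finset.range (n + 1), 2 * a (2 * k) * v ^ (2 * k)| ≤
        C * v ^ (2 * n) := by
  have hyn_an : AnalyticAt ℝ (fun v => y (-v)) 0 := by
    have hneg : AnalyticAt ℝ (fun v : ℝ => -v) 0 := analyticAt_id.neg
    have hy' : AnalyticAt ℝ y ((fun v : ℝ => -v) 0) := by simpa using hy_an
    exact hy'.comp hneg
  obtain ⟨py, hpy⟩ := hy_an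
  obtain ⟨qy, hqy⟩ := hyn_an
  have hG : HasFPowerSeriesAt (fun v => y v + y (-v)) (py + qy) 0 := hpy.add hqy
  have hcoeff : ∀ k, (py + qy).coeff k = (1 + (-1:ℝ)^k) * a k := by
    intro k
    have h1 : py.coeff k = a k := by rw [coeff_eq hpy, ha]
    have h2 : qy.coeff k = (-1:ℝ)^k * a k := by
      rw [coeff_eq hqy, iteratedDeriv_comp_neg, ha]
      simp [smul_eq_mul]
      ring
    have h3 : (py + qy).coeff k = py.coeff k + qy.coeff k := rfl
    rw [h3, h1, h2]; ring
  -- partial sum identity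
  have hps : ∀ v : ℝ, (py + qy).partialSum (2*n + 1) v =
      ∑ k ∈ Finset.range (n + 1), 2 * a (2 * k) * v ^ (2 * k) := by
    intro v
    rw [FormalMultilinearSeries.partialSum]
    have hterm : ∀ k, ((py+qy) k fun _ => v) = (1 + (-1:ℝ)^k) * a k * v ^ k := by
      intro k
      rw [FormalMultilinearSeries.apply_eq_pow_smul_coeff, hcoeff k, smul_eq_mul]
      ring
    rw [Finset.sum_congr rfl (fun k _ => hterm k)]
    -- now reindex: odd terms vanish
    have himg : (Finset.range (n+1)).image (fun k => 2*k) ⊆ Finset.range (2*n+1) := by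
      intro j hj
      simp only [Finset.mem_image, Finset.mem_range] at hj ⊢
      obtain ⟨k, hk, rfl⟩ := hj
      omega
    rw [← Finset.sum_subset himg]
    · rw [Finset.sum_image (by intro a _ b _ h; dsimp only at h; omega)]
      apply Finset.sum_congr rfl
      intro k _
      rw [pow_mul, neg_one_sq, one_pow]
      ring
    · intro j hj hnot
      simp only [Finset.mem_image, Finset.mem_range] at hnot hj
      have hodd : ¬ Even j := by
        intro ⟨k, hk⟩
        exact hnot ⟨k, by omega, by omega⟩
      rw [Odd.neg_one_pow (Nat.not_even_iff_odd.1 hodd)]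
      ring
  -- isBigO bound
  have hbig := hG.isBigO_sub_partialSum_pow (2*n + 1)
  rw [Asymptotics.isBigO_iff] at hbig
  obtain ⟨c, hc⟩ := hbig
  rw [Metric.eventually_nhds_iff] at hc
  obtain ⟨δ, hδpos, hδ⟩ := hc
  set ε := δ / 2 with hε
  have hεpos : 0 < ε := by positivity
  refine ⟨(|c| + 1) * ε + 1, by positivity, ε, hεpos, ?_⟩
  intro v hv
  have hvδ : dist v (0:ℝ) < δ := by
    rw [Real.dist_eq, sub_zero]
    calc |v| ≤ ε := hv
    _ < δ := by rw [hε]; linarith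
  have h2 := hδ hvδ
  simp only [zero_add, norm_norm] at h2
  rw [hps v] at h2
  have hvpow : (0:ℝ) ≤ v ^ (2*n) := by rw [pow_mul]; positivity
  have hnorm : ‖v‖ ^ (2*n+1) = |v| * v^(2*n) := by
    rw [Real.norm_eq_abs, pow_succ, ← abs_pow]
    rw [abs_of_nonneg (by positivity : (0:ℝ) ≤ v ^ (2*n))]
    ring
  calc |y v + y (-v) - ∑ k ∈ Finset.range (n + 1), 2 * a (2 * k) * v ^ (2 * k)|
      ≤ c * ‖‖v‖ ^ (2*n+1)‖ := h2
    _ ≤ |c| * (|v| * v^(2*n)) := by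
        have he : ‖‖v‖ ^ (2*n+1)‖ = |v| * v^(2*n) := by
          rw [Real.norm_eq_abs (‖v‖^(2*n+1)), abs_of_nonneg (pow_nonneg (norm_nonneg v) _), hnorm]
        rw [he]
        exact mul_le_mul_of_nonneg_right (le_abs_self c) (mul_nonneg (abs_nonneg v) hvpow)
    _ ≤ ((|c| + 1) * ε + 1) * v ^ (2*n) := by
        have h4 : |c| * |v| ≤ (|c|+1)*ε + 1 := by
          have h5 : |c| * |v| ≤ |c| * ε := mul_le_mul_of_nonneg_left hv (abs_nonneg c)
          nlinarith [abs_nonneg c, hεpos]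
        calc |c| * (|v| * v^(2*n)) = (|c| * |v|) * v^(2*n) := by ring
        _ ≤ ((|c|+1)*ε+1) * v^(2*n) := mul_le_mul_of_nonneg_right h4 hvpow


theorem far_bound {f y : ℝ → ℝ} {a : ℕ → ℝ}
    (hy : ∀ v : ℝ, y v = if v = 0 then Real.sqrt 2 / 2 else v / f v)
    (hmono : StrictMono f) (hf0 : f 0 = 0) (n : ℕ) (hn : 1 ≤ n) {ε : ℝ} (hε : 0 < ε) :
    ∃ C : ℝ, 0 < C ∧ ∀ v : ℝ, ε ≤ |v| →
      |y v + y (-v) - ∑ k ∈ Finset.range (n + 1), 2 * a (2 * k) * v ^ (2 * k)| ≤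
        C * v ^ (2 * n) := by
  have hfε : 0 < f ε := by have := hmono hε; rwa [hf0] at this
  have hfnε : f (-ε) < 0 := by have := hmono (neg_lt_zero.2 hε); rwa [hf0] at this
  set m := min (f ε) (-f (-ε)) with hmdef
  have hm : 0 < m := lt_min hfε (by linarith)
  have hbound : ∀ v : ℝ, ε ≤ |v| → m ≤ |f v| := by
    intro v hv
    rcases le_abs.mp hv with h | h
    · have h1 : f ε ≤ f v := hmono.monotone h
      rw [abs_of_pos (lt_of_lt_of_le hfε h1)]
      exact le_trans (min_le_left _ _) h1
    · have h2 : v ≤ -ε := by linarith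
      have h1 : f v ≤ f (-ε) := hmono.monotone h2
      rw [abs_of_neg (lt_of_le_of_lt h1 hfnε)]
      have := min_le_right (f ε) (-f (-ε))
      linarith
  have hyb : ∀ v : ℝ, ε ≤ |v| → |y v| ≤ v ^ (2*n) / (m * ε ^ (2*n-1)) := by
    intro v hv
    have hv0 : v ≠ 0 := by
      intro h; rw [h, abs_zero] at hv; linarith
    have hyv : |y v| ≤ |v| / m := by
      rw [hy v, if_neg hv0, abs_div]
      exact div_le_div_of_nonneg_left (abs_nonneg v) hm (hbound v hv)
    have hvn : |v| ^ (2*n) = v ^ (2*n) := by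
      rw [← abs_pow]
      exact abs_of_nonneg (by rw [pow_mul]; positivity)
    have h1 : |v| * ε ^ (2*n-1) ≤ v ^ (2*n) := by
      rw [← hvn]
      calc |v| * ε ^ (2*n-1) ≤ |v| * |v| ^ (2*n-1) :=
            mul_le_mul_of_nonneg_left (pow_le_pow_left₀ hε.le hv _) (abs_nonneg v)
        _ = |v| ^ (2*n) := by rw [← pow_succ']; congr 1; omega
    rw [le_div_iff₀ (by positivity)]
    calc |y v| * (m * ε ^ (2*n-1)) ≤ (|v| / m) * (m * ε ^ (2*n-1)) := by
          exact mul_le_mul_of_nonneg_right hyv (by positivity)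
      _ = |v| * ε ^ (2*n-1) := by field_simp
      _ ≤ v ^ (2*n) := h1
  set C := 2 / (m * ε ^ (2*n-1)) + ∑ k ∈ Finset.range (n+1), 2 * |a (2*k)| / ε ^ (2*(n-k))
    with hC
  refine ⟨C, ?_, ?_⟩
  · apply add_pos_of_pos_of_nonneg (by positivity)
    apply Finset.sum_nonneg
    intro k _
    positivity
  intro v hv
  have hvneg : ε ≤ |-v| := by rwa [abs_neg]
  have hvn : |v| ^ (2*n) = v ^ (2*n) := by
    rw [← abs_pow]
    exact abs_of_nonneg (by rw [pow_mul]; positivity)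
  have hsum : |∑ k ∈ Finset.range (n + 1), 2 * a (2 * k) * v ^ (2 * k)| ≤
      ∑ k ∈ Finset.range (n + 1), (2 * |a (2*k)| / ε ^ (2*(n-k))) * v ^ (2*n) := by
    apply le_trans (Finset.abs_sum_le_sum_abs _ _)
    apply Finset.sum_le_sum
    intro k hk
    have hkn : k ≤ n := by simp only [Finset.mem_range] at hk; omega
    have habs : |2 * a (2*k) * v ^ (2*k)| = 2 * |a (2*k)| * |v| ^ (2*k) := by
      rw [abs_mul, abs_mul, abs_pow, abs_two]
    rw [habs]
    have hpow : |v| ^ (2*k) * ε ^ (2*(n-k)) ≤ v ^ (2*n) := by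
      rw [← hvn]
      calc |v| ^ (2*k) * ε ^ (2*(n-k)) ≤ |v| ^ (2*k) * |v| ^ (2*(n-k)) :=
            mul_le_mul_of_nonneg_left (pow_le_pow_left₀ hε.le hv _) (by positivity)
        _ = |v| ^ (2*n) := by rw [← pow_add]; congr 1; omega
    have hstep : |v| ^ (2*k) ≤ v ^ (2*n) / ε ^ (2*(n-k)) := by
      rw [le_div_iff₀ (by positivity)]
      exact hpow
    calc 2 * |a (2*k)| * |v| ^ (2*k) ≤ 2 * |a (2*k)| * (v ^ (2*n) / ε ^ (2*(n-k))) :=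
          mul_le_mul_of_nonneg_left hstep (by positivity)
      _ = (2 * |a (2*k)| / ε ^ (2*(n-k))) * v ^ (2*n) := by ring
  calc |y v + y (-v) - ∑ k ∈ Finset.range (n + 1), 2 * a (2 * k) * v ^ (2 * k)|
      ≤ |y v| + |y (-v)| + |∑ k ∈ Finset.range (n + 1), 2 * a (2 * k) * v ^ (2 * k)| := by
        apply le_trans (abs_sub _ _)
        gcongr
        exact abs_add_le _ _
    _ ≤ v ^ (2*n) / (m * ε ^ (2*n-1)) + v ^ (2*n) / (m * ε ^ (2*n-1)) +
        ∑ k ∈ Finset.range (n + 1), (2 * |a (2*k)| / ε ^ (2*(n-k))) * v ^ (2*n) := by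
        gcongr
        · exact hyb v hv
        · have h := hyb (-v) hvneg
          rwa [show (-v) ^ (2*n) = v ^ (2*n) by rw [pow_mul, pow_mul, neg_sq]] at h
    _ = C * v ^ (2*n) := by
        rw [hC, add_mul, Finset.sum_mul]
        congr 1
        field_simp
        ring

theorem stmt_16 (f : ℝ → ℝ)
    (hf : ∀ u : ℝ, f u ∈ Set.Ioi (-1 : ℝ) ∧
      Real.sign (f u) * Real.sqrt (f u - Real.log (1 + f u)) = u)
    (y : ℝ → ℝ)
    (hy : ∀ v : ℝ, y v = if v = 0 then Real.sqrt 2 / 2 else v / f v)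
    (a : ℕ → ℝ)
    (ha : ∀ k : ℕ, a k = iteratedDeriv k y 0 / (Nat.factorial k)) :
    ∀ n : ℕ, 1 ≤ n → ∃ C : ℝ, 0 < C ∧ ∀ v : ℝ,
      |y v + y (-v) - ∑ k ∈ Finset.range (n + 1), 2 * a (2 * k) * v ^ (2 * k)| ≤
        C * v ^ (2 * n) := by
  intro n hn
  have hf' : ∀ u : ℝ, f u ∈ Set.Ioi (-1 : ℝ) ∧ gg (f u) = u := fun u => ⟨(hf u).1, (hf u).2⟩
  obtain ⟨hf_an, hf0, hdf, hmono⟩ := ff_analytic hf'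
  have hy_an := yy_analytic hf_an hf0 hdf hy
  obtain ⟨C₁, hC₁, ε, hε, hnear⟩ := near_bound hy_an ha n
  obtain ⟨C₂, hC₂, hfar⟩ := far_bound hy hmono hf0 n hn hε
  refine ⟨C₁ + C₂, by positivity, ?_⟩
  intro v
  have hvpow : (0:ℝ) ≤ v ^ (2*n) := by rw [pow_mul]; positivity
  rcases le_total |v| ε with h | h
  · calc |y v + y (-v) - ∑ k ∈ Finset.range (n + 1), 2 * a (2 * k) * v ^ (2 * k)|
        ≤ C₁ * v ^ (2*n) := hnear v h
      _ ≤ (C₁ + C₂) * v ^ (2*n) := by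
          apply mul_le_mul_of_nonneg_right _ hvpow
          linarith
  · calc |y v + y (-v) - ∑ k ∈ Finset.range (n + 1), 2 * a (2 * k) * v ^ (2 * k)|
        ≤ C₂ * v ^ (2*n) := hfar v h
      _ ≤ (C₁ + C₂) * v ^ (2*n) := by
          apply mul_le_mul_of_nonneg_right _ hvpow
          linarith
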